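/- arXiv:1906.10599 — 2 statements merged into one kernel-verified Lean document; each statement's English description precedes it below -/
import Mathlib

section
/- Let ρ₀ : [a,∞) → ℝ be continuous and positive, η(r) = ∫_a^r y ρ₀(y) dy, and r₀ = η⁻¹. Then for every x in the range of η, r₀(x) = √(a² + ∫₀ˣ 2/ρ₀(r₀(y)) dy), equivalently r₀(x)² = a² + 2∫₀ˣ τ₀(y) dy where τ₀(y) = 1/ρ₀(r₀(y)). -/
open MeasureTheory

theorem stmt_5 (a : ℝ) (ha : 0 < a) (ρ₀ η r₀ : ℝ → ℝ)
    (hcont : ContinuousOn ρ₀ (Set.Ici a)) (hpos : ∀ y ∈ Set.Ici a, 0 < ρ₀ y)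
    (hη : ∀ r, η r = ∫ y in a..r, y * ρ₀ y)
    (hmono : StrictMonoOn η (Set.Ici a)) (hηa : η a = 0)
    (hinv : ∀ r ∈ Set.Ici a, r₀ (η r) = r)
    (hmem : ∀ x ∈ η '' Set.Ici a, r₀ x ∈ Set.Ici a)
    (hderiv : ∀ x ∈ η '' Set.Ici a,
      HasDerivAt r₀ (1 / (r₀ x * ρ₀ (r₀ x))) x) :
    ∀ x ∈ η '' Set.Ici a,
      r₀ x = Real.sqrt (a ^ 2 + ∫ y in (0:ℝ)..x, 2 / ρ₀ (r₀ y)) ∧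
      r₀ x ^ 2 = a ^ 2 + 2 * ∫ y in (0:ℝ)..x, 1 / ρ₀ (r₀ y) := by
  rintro x ⟨r, hr, rfl⟩
  have hx0 : 0 ≤ η r := hηa ▸ hmono.monotoneOn (Set.self_mem_Ici) hr hr
  -- every point of [0, η r] is in the image of η
  have hIcc : Set.Icc (0:ℝ) (η r) ⊆ η '' Set.Ici a := by
    have hηc : ContinuousOn η (Set.Icc a r) := by
      have hf : IntervalIntegrable (fun y => y * ρ₀ y) volume a r := by
        apply ContinuousOn.intervalIntegrable
        apply (continuousOn_id.mul hcont).mono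
        rw [Set.uIcc_of_le hr]
        exact Set.Icc_subset_Ici_self
      have := intervalIntegral.continuousOn_primitive_interval' hf
        (by rw [Set.uIcc_of_le hr]; exact Set.left_mem_Icc.2 hr)
      rw [Set.uIcc_of_le hr] at this
      exact this.congr (fun s _ => hη s)
    have := intermediate_value_Icc hr hηc
    rw [hηa] at this
    exact fun z hz => Set.image_mono (Set.Icc_subset_Ici_self) (this hz)
  have hsub : Set.uIcc (0:ℝ) (η r) ⊆ η '' Set.Ici a := by
    rw [Set.uIcc_of_le hx0]; exact hIcc
  -- r₀ is continuous on the interval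
  have hr₀cont : ContinuousOn r₀ (Set.uIcc 0 (η r)) := fun y hy =>
    ((hderiv y (hsub hy)).continuousAt).continuousWithinAt
  have hmaps : Set.MapsTo r₀ (Set.uIcc 0 (η r)) (Set.Ici a) := fun y hy => hmem y (hsub hy)
  have hρcont : ContinuousOn (fun y => ρ₀ (r₀ y)) (Set.uIcc 0 (η r)) :=
    hcont.comp hr₀cont hmaps
  have hρne : ∀ y ∈ Set.uIcc (0:ℝ) (η r), ρ₀ (r₀ y) ≠ 0 := fun y hy =>
    (hpos _ (hmaps hy)).ne'
  have hint : IntervalIntegrable (fun y => 2 / ρ₀ (r₀ y)) volume 0 (η r) := by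
    apply ContinuousOn.intervalIntegrable
    exact (continuousOn_const.div hρcont hρne)
  have hDeriv : ∀ y ∈ Set.uIcc (0:ℝ) (η r),
      HasDerivAt (fun t => r₀ t ^ 2) (2 / ρ₀ (r₀ y)) y := by
    intro y hy
    have h1 := (hderiv y (hsub hy)).pow 2
    have hra : a ≤ r₀ y := hmaps hy
    have hrne : r₀ y ≠ 0 := (lt_of_lt_of_le ha hra).ne'
    have : (2:ℕ) * r₀ y ^ (2 - 1) * (1 / (r₀ y * ρ₀ (r₀ y))) = 2 / ρ₀ (r₀ y) := by
      field_simp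
      push_cast
      ring
    rwa [this] at h1
  have hFTC := intervalIntegral.integral_eq_sub_of_hasDerivAt hDeriv hint
  have hr00 : r₀ 0 = a := by rw [← hηa, hinv a Set.self_mem_Ici]
  rw [hinv r hr, hr00] at hFTC
  have hsq : r ^ 2 = a ^ 2 + ∫ y in (0:ℝ)..(η r), 2 / ρ₀ (r₀ y) := by
    rw [hFTC]; ring
  constructor
  · rw [hinv r hr, ← hsq]
    exact (Real.sqrt_sq (le_of_lt (lt_of_lt_of_le ha hr))).symm
  · rw [hinv r hr, hsq]
    congr 1
    rw [← intervalIntegral.integral_const_mul]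
    congr 1 with y
    ring
end

section
/- Let A be an n×n real matrix and S a symmetric positive definite matrix such that SA is symmetric. Then A is diagonalizable over ℝ: there is an invertible matrix L with rows consisting of left eigenvectors of A such that LA = D L for a real diagonal matrix D, and S = LᵀL for a suitable choice of L. -/
open Matrix

theorem stmt_11 (n : ℕ) (A S : Matrix (Fin n) (Fin n) ℝ)
    (hSsymm : Sᵀ = S) (hSpos : ∀ x : Fin n → ℝ, x ≠ 0 → 0 < x ⬝ᵥ S.mulVec x)
    (hSA : (S * A)ᵀ = S * A) :
    ∃ L D : Matrix (Fin n) (Fin n) ℝ, IsUnit L ∧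
      (∀ i j, i ≠ j → D i j = 0) ∧ L * A = D * L ∧ S = Lᵀ * L := by
  have hSpd : S.PosDef := by
    refine Matrix.PosDef.of_dotProduct_mulVec_pos ?_ ?_
    · rw [IsHermitian, conjTranspose_eq_transpose_of_trivial, hSsymm]
    · intro x hx
      simpa using hSpos x hx
  set T := (open scoped MatrixOrder in CFC.sqrt S) with hTdef
  have hTT : T * T = S := by
    open scoped MatrixOrder in exact CFC.sqrt_mul_sqrt_self S hSpd.posSemidef.nonneg
  have hTherm : T.IsHermitian := by
    open scoped MatrixOrder in exact (CFC.sqrt_nonneg S).posSemidef.1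
  have hTsymm : Tᵀ = T := by
    rw [← conjTranspose_eq_transpose_of_trivial]; exact hTherm
  have hSdet : IsUnit S.det := hSpd.det_pos.ne'.isUnit
  have hTdet : IsUnit T.det := by
    have h : T.det * T.det = S.det := by rw [← det_mul, hTT]
    exact isUnit_of_mul_isUnit_left (h ▸ hSdet)
  have hTinv : T * T⁻¹ = 1 := mul_nonsing_inv T hTdet
  have hTinv' : T⁻¹ * T = 1 := nonsing_inv_mul T hTdet
  set B := T * A * T⁻¹ with hBdef
  have hAS : Aᵀ * S = S * A := by
    calc Aᵀ * S = Aᵀ * Sᵀ := by rw [hSsymm]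
    _ = (S * A)ᵀ := by rw [transpose_mul]
    _ = S * A := hSA
  have key : Aᵀ * (T * T) = (T * T) * A := by rw [hTT]; exact hAS
  have hmain : T⁻¹ * (Aᵀ * T) = T * (A * T⁻¹) := by
    have h := congrArg (fun M => T⁻¹ * M * T⁻¹) key
    simp only [Matrix.mul_assoc] at h
    rw [hTinv, Matrix.mul_one, ← Matrix.mul_assoc T⁻¹ T, hTinv', Matrix.one_mul] at h
    exact h
  have hBsymm : Bᵀ = B := by
    calc Bᵀ = T⁻¹ᵀ * Aᵀ * Tᵀ := by
          rw [hBdef, transpose_mul, transpose_mul, Matrix.mul_assoc]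
    _ = T⁻¹ * (Aᵀ * T) := by rw [transpose_nonsing_inv, hTsymm, Matrix.mul_assoc]
    _ = T * (A * T⁻¹) := hmain
    _ = B := by rw [hBdef, Matrix.mul_assoc]
  have hBherm : B.IsHermitian := by
    rw [IsHermitian, conjTranspose_eq_transpose_of_trivial]; exact hBsymm
  set U : Matrix (Fin n) (Fin n) ℝ := (hBherm.eigenvectorUnitary : Matrix (Fin n) (Fin n) ℝ)
    with hUdef
  have hUmem : U ∈ Matrix.unitaryGroup (Fin n) ℝ := hBherm.eigenvectorUnitary.2
  have hUU : star U * U = 1 := (Matrix.mem_unitaryGroup_iff').mp hUmem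
  have hUU' : U * star U = 1 := (Matrix.mem_unitaryGroup_iff).mp hUmem
  set D : Matrix (Fin n) (Fin n) ℝ :=
    diagonal (RCLike.ofReal ∘ hBherm.eigenvalues) with hDdef
  have hspec : star U * B * U = D := by
    have h : B = U * D * star U := hBherm.spectral_theorem
    rw [h, ← Matrix.mul_assoc, ← Matrix.mul_assoc, hUU, Matrix.one_mul, Matrix.mul_assoc, hUU,
      Matrix.mul_one]
  refine ⟨star U * T, D, ?_, ?_, ?_, ?_⟩
  · apply IsUnit.mul
    · rw [isUnit_iff_isUnit_det]
      have h : (star U).det * U.det = 1 := by rw [← det_mul, hUU, det_one]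
      exact isUnit_of_mul_isUnit_left (by rw [h]; exact isUnit_one)
    · rwa [isUnit_iff_isUnit_det]
  · intro i j hij
    simp [hDdef, diagonal_apply_ne _ hij]
  · have hBT : B * T = T * A := by
      rw [hBdef, Matrix.mul_assoc, hTinv', Matrix.mul_one]
    calc star U * T * A = star U * (B * T) := by rw [hBT, Matrix.mul_assoc]
    _ = (star U * B * U) * (star U * T) := by
        simp only [Matrix.mul_assoc]
        rw [← Matrix.mul_assoc U (star U) T, hUU', Matrix.one_mul]
    _ = D * (star U * T) := by rw [hspec]
  · have hstarU : (star U)ᵀ = U := by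
      have h : star U = Uᵀ := by
        rw [← conjTranspose_eq_transpose_of_trivial]; rfl
      rw [h, transpose_transpose]
    calc S = T * T := hTT.symm
    _ = T * (U * star U) * T := by rw [hUU', Matrix.mul_one]
    _ = (Tᵀ * (star U)ᵀ) * (star U * T) := by
        rw [hTsymm, hstarU]; simp only [Matrix.mul_assoc]
    _ = (star U * T)ᵀ * (star U * T) := by rw [transpose_mul]
end
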